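/- Let (a,b,c) be a Markoff triple of reals, T a trace function for (a,b,c), and F as defined. Then F is strictly convex on the rationals of [0,1]: for all rationals 0 ≤ x < y < z ≤ 1, (F(y) − F(x))·(z − y) < (F(z) − F(y))·(y − x). -/

import Mathlib

set_option maxHeartbeats 1000000

/-- A vector of `ℤ²` is primitive if its coordinates are coprime. -/
def Primitive (v : ℤ × ℤ) : Prop := IsCoprime v.1 v.2

/-- A trace function for a triple `(a,b,c)` of reals: a function on `ℤ²` satisfying
`T(−v) = T(v)` for primitive `v`, with `T(0,1) = a`, `T(1,1) = b`, `T(1,0) = c`, and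
`T(v+w) = T(v)·T(w) − T(v−w)` whenever `v, w` are primitive with `det(v,w) = ±1`. -/
structure IsTraceFunction (a b c : ℝ) (T : ℤ × ℤ → ℝ) : Prop where
  neg_eq : ∀ v : ℤ × ℤ, Primitive v → T (-v) = T v
  map_01 : T (0, 1) = a
  map_11 : T (1, 1) = b
  map_10 : T (1, 0) = c
  add_rule : ∀ v w : ℤ × ℤ, Primitive v → Primitive w →
    (v.1 * w.2 - v.2 * w.1 = 1 ∨ v.1 * w.2 - v.2 * w.1 = -1) →
    T (v + w) = T v * T w - T (v - w)


/-- The hyperbolic length associated to a trace `t`: `l = 2·log((t + √(t²−4))/2)`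
(so that `t = 2·cosh(l/2)` when `t > 2`). -/
noncomputable def traceLength (t : ℝ) : ℝ := 2 * Real.log ((t + Real.sqrt (t ^ 2 - 4)) / 2)

/-- For a rational `r = p/q` in lowest terms (`q ≥ 1`), `F(r) = l(p/q)/q` where
`l(p/q) = 2·log((t+√(t²−4))/2)` and `t = T(p,q)`. -/
noncomputable def Ffun (T : ℤ × ℤ → ℝ) (r : ℚ) : ℝ :=
  traceLength (T (r.num, (r.den : ℤ))) / (r.den : ℝ)


namespace MK

def udet (v w : ℤ × ℤ) : ℤ := v.1 * w.2 - v.2 * w.1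

def Uni (v w : ℤ × ℤ) : Prop := udet v w = 1 ∨ udet v w = -1

def Mk (x y z : ℝ) : Prop := x^2 + y^2 + z^2 = x*y*z

noncomputable def phi (t : ℝ) : ℝ := (t + Real.sqrt (t^2 - 4)) / 2

lemma traceLength_eq (t : ℝ) : traceLength t = 2 * Real.log (phi t) := rfl

lemma sq_sub_four_nonneg {t : ℝ} (h : 2 < t) : 0 ≤ t^2 - 4 := by nlinarith

lemma one_lt_phi {t : ℝ} (h : 2 < t) : 1 < phi t := by
  have := Real.sqrt_nonneg (t^2 - 4)
  unfold phi; nlinarith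

lemma phi_pos {t : ℝ} (h : 2 < t) : 0 < phi t := lt_trans one_pos (one_lt_phi h)

lemma phi_add_inv {t : ℝ} (h : 2 < t) : phi t + (phi t)⁻¹ = t := by
  have hs : Real.sqrt (t^2-4) ^ 2 = t^2 - 4 := Real.sq_sqrt (sq_sub_four_nonneg h)
  have hp : 0 < phi t := phi_pos h
  have key : phi t ^ 2 + 1 = t * phi t := by
    unfold phi at *
    field_simp
    nlinarith [hs]
  field_simp
  nlinarith [key]

lemma phi_of {u : ℝ} (hu : 1 < u) : phi (u + u⁻¹) = u := by
  have hu0 : u ≠ 0 := by positivity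
  have h1 : (u + u⁻¹)^2 - 4 = (u - u⁻¹)^2 := by field_simp; ring
  have h2 : (0:ℝ) ≤ u - u⁻¹ := by
    have : u⁻¹ ≤ 1 := by rw [inv_le_one_iff₀]; right; linarith
    linarith
  unfold phi
  rw [h1, Real.sqrt_sq h2]
  field_simp
  ring

lemma phi_lt_phi {s t : ℝ} (hs : 2 < s) (hst : s < t) : phi s < phi t := by
  have : Real.sqrt (s^2-4) < Real.sqrt (t^2-4) := by
    apply Real.sqrt_lt_sqrt (sq_sub_four_nonneg hs)
    nlinarith
  unfold phi; linarith

lemma lt_phi_of_sq {t y : ℝ} (h : y^2 < t^2 - 4) : (t + y)/2 < phi t := by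
  have h1 : y ≤ |y| := le_abs_self y
  have h2 : |y| = Real.sqrt (y^2) := (Real.sqrt_sq_eq_abs y).symm
  have h3 : Real.sqrt (y^2) < Real.sqrt (t^2-4) := Real.sqrt_lt_sqrt (sq_nonneg y) h
  unfold phi; linarith

lemma mk_middle {x y z : ℝ} (h : Mk x y z) (hx : 2 < x) (hz : 2 < z) : 2 < y := by
  have h1 : y * (x*z - y) = x^2 + z^2 := by unfold Mk at h; linear_combination -h
  have hy0 : 0 < y := by
    by_contra h0
    push_neg at h0
    have h4 : 0 < x*z - y := by nlinarith
    have h5 : y * (x*z - y) ≤ 0 := mul_nonpos_iff.mpr (Or.inr ⟨h0, h4.le⟩)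
    nlinarith
  have hy'0 : 0 < x*z - y := by
    rcases lt_or_ge 0 (x*z - y) with h' | h'
    · exact h'
    · nlinarith [mul_nonpos_iff.mpr (Or.inl ⟨hy0.le, h'⟩)]
  by_contra hcon
  push_neg at hcon
  have hkey : (2 - y) * (2 - (x*z - y)) = (x-z)^2 + 4 := by nlinarith [h1]
  have hB : 0 < 2 - (x*z - y) := by nlinarith [sq_nonneg (x-z)]
  nlinarith [h1, mul_le_mul_of_nonneg_right hcon hy'0.le]

lemma mk_flip {x y z : ℝ} (h : Mk x y z) : Mk x (x*y - z) y := by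
  unfold Mk at *; linear_combination h

lemma mk_flip2 {x y z : ℝ} (h : Mk x y z) : Mk x (x*z - y) z := by
  unfold Mk at *; linear_combination h

lemma mk_comm {x y z : ℝ} (h : Mk x y z) : Mk z y x := by
  unfold Mk at *; linear_combination h

lemma prim_left {v w : ℤ × ℤ} (h : Uni v w) : Primitive v := by
  unfold Uni udet at h
  rcases h with h | h
  · exact ⟨w.2, -w.1, by linear_combination h⟩
  · exact ⟨-w.2, w.1, by linear_combination -h⟩

lemma prim_right {v w : ℤ × ℤ} (h : Uni v w) : Primitive w := by
  unfold Uni udet at h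
  rcases h with h | h
  · exact ⟨-v.2, v.1, by linear_combination h⟩
  · exact ⟨v.2, -v.1, by linear_combination -h⟩

end MK

namespace MK

variable {a b c : ℝ} {T : ℤ × ℤ → ℝ}

def Good (T : ℤ × ℤ → ℝ) (v w : ℤ × ℤ) : Prop :=
  2 < T v ∧ 2 < T w ∧ 2 < T (v + w) ∧ Mk (T v) (T (v + w)) (T w)

lemma T_sub (hT : IsTraceFunction a b c T) {v w : ℤ × ℤ} (h : Uni v w) :
    T (v - w) = T v * T w - T (v + w) := by
  have := hT.add_rule v w (prim_left h) (prim_right h) h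
  linarith

-- determinant bookkeeping
lemma uni_swap {v w : ℤ × ℤ} (h : Uni v w) : Uni w v := by
  unfold Uni udet at *
  rcases h with h | h
  · right; linear_combination -h
  · left; linear_combination -h

lemma uni_negR {v w : ℤ × ℤ} (h : Uni v w) : Uni v (-w) := by
  unfold Uni udet at *
  rcases h with h | h
  · right; simp; linarith
  · left; simp; linarith

lemma uni_addR {v w : ℤ × ℤ} (h : Uni v w) : Uni v (w + v) := by
  unfold Uni udet at *
  simp only [Prod.fst_add, Prod.snd_add]
  rcases h with h | h
  · left; linarith [h]; 
  · right; linarith [h]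

lemma uni_subR {v w : ℤ × ℤ} (h : Uni v w) : Uni v (w - v) := by
  unfold Uni udet at *
  simp only [Prod.fst_sub, Prod.snd_sub]
  rcases h with h | h
  · left; linear_combination h
  · right; linear_combination h

lemma prim_neg {v : ℤ × ℤ} (h : Primitive v) : Primitive (-v) := by
  obtain ⟨p, q, hpq⟩ := h
  exact ⟨-p, -q, by simp; linear_combination hpq⟩

lemma mk_swap23 {x y z : ℝ} (h : Mk x y z) : Mk x z y := by
  unfold Mk at *; linear_combination h

lemma good_swap (h : Good T v w) : Good T w v := by
  obtain ⟨h1, h2, h3, h4⟩ := h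
  exact ⟨h2, h1, by rwa [add_comm], by rw [add_comm]; exact mk_comm h4⟩

lemma good_negR (hT : IsTraceFunction a b c T) {v w : ℤ × ℤ} (hu : Uni v w)
    (h : Good T v w) : Good T v (-w) := by
  obtain ⟨h1, h2, h3, h4⟩ := h
  have hnw : T (-w) = T w := hT.neg_eq w (prim_right hu)
  have hsub : T (v - w) = T v * T w - T (v + w) := T_sub hT hu
  have hvw : v + -w = v - w := by abel
  have hmk : Mk (T v) (T (v - w)) (T w) := by
    rw [hsub]; exact mk_flip2 h4
  refine ⟨h1, by rwa [hnw], ?_, ?_⟩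
  · rw [hvw]; exact mk_middle hmk h1 h2
  · rw [hvw, hnw]; exact hmk

lemma good_negL (hT : IsTraceFunction a b c T) {v w : ℤ × ℤ} (hu : Uni v w)
    (h : Good T v w) : Good T (-v) w :=
  good_swap (good_negR hT (uni_swap hu) (good_swap h))

/-- from Good v w deduce Good v (w+v) -/
lemma good_addR (hT : IsTraceFunction a b c T) {v w : ℤ × ℤ} (hu : Uni v w)
    (h : Good T v w) : Good T v (w + v) := by
  obtain ⟨h1, h2, h3, h4⟩ := h
  have hu2 : Uni v (v + w) := by
    unfold Uni udet at *
    simp only [Prod.fst_add, Prod.snd_add]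
    rcases hu with h | h
    · left; linear_combination h
    · right; linear_combination h
  have key : T (v + (v + w)) = T v * T (v + w) - T w := by
    have h5 := hT.add_rule v (v + w) (prim_left hu2) (prim_right hu2) hu2
    have h6 : v - (v + w) = -w := by abel
    have h7 : T (-w) = T w := hT.neg_eq w (prim_right hu)
    rw [h6, h7] at h5
    exact h5
  have hvwv : v + (w + v) = v + (v + w) := by abel
  have hmk : Mk (T v) (T (v + (v + w))) (T (v + w)) := by
    rw [key]; exact mk_flip h4
  refine ⟨h1, by rwa [add_comm w v], ?_, ?_⟩
  · rw [hvwv]; exact mk_middle hmk h1 h3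
  · rw [hvwv, add_comm w v]; exact hmk

/-- from Good v w deduce Good v (w-v) -/
lemma good_subR (hT : IsTraceFunction a b c T) {v w : ℤ × ℤ} (hu : Uni v w)
    (h : Good T v w) : Good T v (w - v) := by
  obtain ⟨h1, h2, h3, h4⟩ := h
  have hwv : v + (w - v) = w := by abel
  have hprim : Primitive (w - v) := by
    have : Uni v (w - v) := uni_subR hu
    exact prim_right this
  have hsub : T (v - w) = T v * T w - T (v + w) := T_sub hT hu
  have hneg : T (w - v) = T (v - w) := by
    have : w - v = -(v - w) := by abel
    rw [this]
    exact hT.neg_eq (v - w) (by rw [show v - w = -(w-v) by abel]; exact prim_neg hprim)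
  have hmk : Mk (T v) (T w) (T (w - v)) := by
    rw [hneg, hsub]
    exact mk_swap23 (mk_flip2 h4)
  refine ⟨h1, ?_, by rwa [hwv], by rwa [hwv]⟩
  · rw [hneg, hsub]
    exact mk_middle (mk_flip2 h4) h1 h2

end MK

namespace MK

variable {a b c : ℝ} {T : ℤ × ℤ → ℝ}

lemma uni_addL {v w : ℤ × ℤ} (h : Uni v w) : Uni (v + w) w := by
  unfold Uni udet at *
  simp only [Prod.fst_add, Prod.snd_add]
  rcases h with h | h
  · left; linear_combination h
  · right; linear_combination h

lemma uni_subL {v w : ℤ × ℤ} (h : Uni v w) : Uni (v - w) w := by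
  unfold Uni udet at *
  simp only [Prod.fst_sub, Prod.snd_sub]
  rcases h with h | h
  · left; linear_combination h
  · right; linear_combination h

lemma dom_case {v w : ℤ × ℤ} (h : Uni v w)
    (h1 : w.1.natAbs ≤ v.1.natAbs) (h2 : w.2.natAbs ≤ v.2.natAbs) :
    (v.1+w.1).natAbs + (v.2+w.2).natAbs < v.1.natAbs + v.2.natAbs ∨
    (v.1-w.1).natAbs + (v.2-w.2).natAbs < v.1.natAbs + v.2.natAbs := by
  unfold Uni udet at h
  by_contra hc
  push_neg at hc
  obtain ⟨hcA, hcB⟩ := hc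
  have hp0 : v.1 ≠ 0 := by
    intro h0
    have hw1 : w.1 = 0 := by omega
    rcases h with h | h <;> rw [h0, hw1] at h <;> simp at h
  have hq0 : v.2 ≠ 0 := by
    intro h0
    have hw2 : w.2 = 0 := by omega
    rcases h with h | h <;> rw [h0, hw2] at h <;> simp at h
  have hw0 : w.1 ≠ 0 ∨ w.2 ≠ 0 := by
    by_contra h0
    push_neg at h0
    rcases h with h | h <;> rw [h0.1, h0.2] at h <;> simp at h
  have key : (w.2 = -w.1 ∧ w.1 ≠ 0 ∧ 2 ≤ (v.1+v.2).natAbs) ∨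
             (w.2 = w.1 ∧ w.1 ≠ 0 ∧ 2 ≤ (v.1-v.2).natAbs) := by omega
  rcases key with ⟨hs, hr, hab⟩ | ⟨hs, hr, hab⟩
  · rw [hs] at h
    have hd : (v.1 + v.2) ∣ 1 := by
      rcases h with h | h
      · exact ⟨-w.1, by linear_combination -h⟩
      · exact ⟨w.1, by linear_combination h⟩
    have hu := Int.isUnit_iff.mp (isUnit_of_dvd_one hd)
    omega
  · rw [hs] at h
    have hd : (v.1 - v.2) ∣ 1 := by
      rcases h with h | h
      · exact ⟨w.1, by linear_combination -h⟩
      · exact ⟨-w.1, by linear_combination h⟩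
    have hu := Int.isUnit_iff.mp (isUnit_of_dvd_one hd)
    omega

lemma reduce {v w : ℤ × ℤ} (h : Uni v w) :
    ((v = ((1:ℤ),(0:ℤ)) ∨ v = (-1,0)) ∧ (w = ((0:ℤ),(1:ℤ)) ∨ w = (0,-1))) ∨
    ((v = ((0:ℤ),(1:ℤ)) ∨ v = (0,-1)) ∧ (w = ((1:ℤ),(0:ℤ)) ∨ w = (-1,0))) ∨
    (v.1+w.1).natAbs + (v.2+w.2).natAbs < v.1.natAbs + v.2.natAbs ∨
    (v.1-w.1).natAbs + (v.2-w.2).natAbs < v.1.natAbs + v.2.natAbs ∨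
    (w.1+v.1).natAbs + (w.2+v.2).natAbs < w.1.natAbs + w.2.natAbs ∨
    (w.1-v.1).natAbs + (w.2-v.2).natAbs < w.1.natAbs + w.2.natAbs := by
  by_cases hA : w.1.natAbs ≤ v.1.natAbs ∧ w.2.natAbs ≤ v.2.natAbs
  · rcases dom_case h hA.1 hA.2 with h' | h'
    · exact Or.inr (Or.inr (Or.inl h'))
    · exact Or.inr (Or.inr (Or.inr (Or.inl h')))
  by_cases hB : v.1.natAbs ≤ w.1.natAbs ∧ v.2.natAbs ≤ w.2.natAbs
  · rcases dom_case (uni_swap h) hB.1 hB.2 with h' | h'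
    · exact Or.inr (Or.inr (Or.inr (Or.inr (Or.inl h'))))
    · exact Or.inr (Or.inr (Or.inr (Or.inr (Or.inr h'))))
  have hm : (v.1.natAbs < w.1.natAbs ∧ w.2.natAbs < v.2.natAbs) ∨
            (w.1.natAbs < v.1.natAbs ∧ v.2.natAbs < w.2.natAbs) := by omega
  unfold Uni udet at h
  have hup : |v.1 * w.2 - v.2 * w.1| = 1 := by
    rcases h with h | h <;> rw [h] <;> norm_num
  rcases hm with ⟨m1, m2⟩ | ⟨m1, m2⟩
  · -- |v1| < |w1|,  |w2| < |v2| : forces v = (0,±1), w = (±1,0)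
    have m1' : |v.1| + 1 ≤ |w.1| := by
      rw [Int.abs_eq_natAbs, Int.abs_eq_natAbs]; exact_mod_cast m1
    have m2' : |w.2| + 1 ≤ |v.2| := by
      rw [Int.abs_eq_natAbs, Int.abs_eq_natAbs]; exact_mod_cast m2
    have step : |v.2 * w.1| - |v.1 * w.2| ≤ 1 := by
      have h1 := abs_sub_abs_le_abs_sub (v.2 * w.1) (v.1 * w.2)
      have h2 : |v.2 * w.1 - v.1 * w.2| = 1 := by rw [abs_sub_comm]; exact hup
      linarith
    have pb : (|w.2| + 1) * (|v.1| + 1) ≤ |v.2| * |w.1| :=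
      mul_le_mul m2' m1' (by positivity) (abs_nonneg _)
    have am1 : |v.1 * w.2| = |v.1| * |w.2| := abs_mul _ _
    have am2 : |v.2 * w.1| = |v.2| * |w.1| := abs_mul _ _
    have hz : |v.1| = 0 ∧ |w.2| = 0 := by
      constructor <;> nlinarith [abs_nonneg v.1, abs_nonneg w.2]
    have hv1 : v.1 = 0 := abs_eq_zero.mp hz.1
    have hw2 : w.2 = 0 := abs_eq_zero.mp hz.2
    rw [hv1, hw2] at h
    have hv2 : v.2 = 1 ∨ v.2 = -1 := by
      apply Int.isUnit_iff.mp
      rcases h with h | h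
      · exact IsUnit.of_mul_eq_one (a := v.2) (-w.1) (by linear_combination h)
      · exact IsUnit.of_mul_eq_one (a := v.2) w.1 (by linear_combination -h)
    have hw1 : w.1 = 1 ∨ w.1 = -1 := by
      apply Int.isUnit_iff.mp
      rcases h with h | h
      · exact IsUnit.of_mul_eq_one (a := w.1) (-v.2) (by linear_combination h)
      · exact IsUnit.of_mul_eq_one (a := w.1) v.2 (by linear_combination -h)
    refine Or.inr (Or.inl ⟨?_, ?_⟩)
    · rcases hv2 with h' | h'
      · left; exact Prod.ext hv1 h'
      · right; exact Prod.ext hv1 h'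
    · rcases hw1 with h' | h'
      · left; exact Prod.ext h' hw2
      · right; exact Prod.ext h' hw2
  · -- |w1| < |v1|, |v2| < |w2| : forces v = (±1,0), w = (0,±1)
    have m1' : |w.1| + 1 ≤ |v.1| := by
      rw [Int.abs_eq_natAbs, Int.abs_eq_natAbs]; exact_mod_cast m1
    have m2' : |v.2| + 1 ≤ |w.2| := by
      rw [Int.abs_eq_natAbs, Int.abs_eq_natAbs]; exact_mod_cast m2
    have step : |v.1 * w.2| - |v.2 * w.1| ≤ 1 := by
      have h1 := abs_sub_abs_le_abs_sub (v.1 * w.2) (v.2 * w.1)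
      linarith [hup, h1]
    have pb : (|v.2| + 1) * (|w.1| + 1) ≤ |w.2| * |v.1| :=
      mul_le_mul m2' m1' (by positivity) (abs_nonneg _)
    have am1 : |v.1 * w.2| = |v.1| * |w.2| := abs_mul _ _
    have am2 : |v.2 * w.1| = |v.2| * |w.1| := abs_mul _ _
    have hz : |v.2| = 0 ∧ |w.1| = 0 := by
      constructor <;> nlinarith [abs_nonneg v.2, abs_nonneg w.1]
    have hv2 : v.2 = 0 := abs_eq_zero.mp hz.1
    have hw1 : w.1 = 0 := abs_eq_zero.mp hz.2
    rw [hv2, hw1] at h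
    have hv1 : v.1 = 1 ∨ v.1 = -1 := by
      apply Int.isUnit_iff.mp
      rcases h with h | h
      · exact IsUnit.of_mul_eq_one (a := v.1) w.2 (by linear_combination h)
      · exact IsUnit.of_mul_eq_one (a := v.1) (-w.2) (by linear_combination -h)
    have hw2 : w.2 = 1 ∨ w.2 = -1 := by
      apply Int.isUnit_iff.mp
      rcases h with h | h
      · exact IsUnit.of_mul_eq_one (a := w.2) v.1 (by linear_combination h)
      · exact IsUnit.of_mul_eq_one (a := w.2) (-v.1) (by linear_combination -h)
    refine Or.inl ⟨?_, ?_⟩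
    · rcases hv1 with h' | h'
      · left; exact Prod.ext h' hv2
      · right; exact Prod.ext h' hv2
    · rcases hw2 with h' | h'
      · left; exact Prod.ext hw1 h'
      · right; exact Prod.ext hw1 h'

end MK

namespace MK

variable {a b c : ℝ} {T : ℤ × ℤ → ℝ}

lemma good_base (hT : IsTraceFunction a b c T) (ha : 2 < a) (hb : 2 < b) (hc : 2 < c)
    (habc : a ^ 2 + b ^ 2 + c ^ 2 = a * b * c) :
    Good T ((1:ℤ),(0:ℤ)) ((0:ℤ),(1:ℤ)) := by
  have hsum : ((1:ℤ),(0:ℤ)) + ((0:ℤ),(1:ℤ)) = ((1:ℤ),(1:ℤ)) := by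
    simp [Prod.ext_iff]
  refine ⟨?_, ?_, ?_, ?_⟩
  · rw [hT.map_10]; exact hc
  · rw [hT.map_01]; exact ha
  · rw [hsum, hT.map_11]; exact hb
  · rw [hsum, hT.map_10, hT.map_01, hT.map_11]
    unfold Mk
    linear_combination habc

lemma uni10 : Uni ((1:ℤ),(0:ℤ)) ((0:ℤ),(1:ℤ)) := by left; rfl

theorem good_all (hT : IsTraceFunction a b c T) (ha : 2 < a) (hb : 2 < b) (hc : 2 < c)
    (habc : a ^ 2 + b ^ 2 + c ^ 2 = a * b * c) :
    ∀ v w : ℤ × ℤ, Uni v w → Good T v w := by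
  have base : Good T ((1:ℤ),(0:ℤ)) ((0:ℤ),(1:ℤ)) := good_base hT ha hb hc habc
  have baseN : Good T ((1:ℤ),(0:ℤ)) ((0:ℤ),(-1:ℤ)) := by
    have := good_negR hT uni10 base
    simpa using this
  have baseL : Good T ((-1:ℤ),(0:ℤ)) ((0:ℤ),(1:ℤ)) := by
    have := good_negL hT uni10 base
    simpa using this
  have baseLN : Good T ((-1:ℤ),(0:ℤ)) ((0:ℤ),(-1:ℤ)) := by
    have hu : Uni ((-1:ℤ),(0:ℤ)) ((0:ℤ),(1:ℤ)) := by right; rfl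
    have := good_negR hT hu baseL
    simpa using this
  have hbase1 : ∀ v w : ℤ × ℤ,
      (v = ((1:ℤ),(0:ℤ)) ∨ v = (-1,0)) → (w = ((0:ℤ),(1:ℤ)) ∨ w = (0,-1)) → Good T v w := by
    intro v w hv hw
    rcases hv with hv | hv <;> rcases hw with hw | hw <;> subst hv <;> subst hw
    · exact base
    · exact baseN
    · exact baseL
    · exact baseLN
  suffices H : ∀ n : ℕ, ∀ v w : ℤ × ℤ, Uni v w →
      v.1.natAbs + v.2.natAbs + w.1.natAbs + w.2.natAbs ≤ n → Good T v w by
    intro v w hu; exact H _ v w hu le_rfl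
  intro n
  induction n with
  | zero =>
    intro v w hu hn
    exfalso
    have h1 : v.1 = 0 := by omega
    have h2 : v.2 = 0 := by omega
    unfold Uni udet at hu
    rcases hu with h | h <;> rw [h1, h2] at h <;> simp at h
  | succ n IH =>
    intro v w hu hn
    rcases reduce hu with ⟨hv, hw⟩ | ⟨hv, hw⟩ | hred | hred | hred | hred
    · exact hbase1 v w hv hw
    · exact good_swap (hbase1 w v hw hv)
    · -- ‖v+w‖ < ‖v‖ : use pair (v+w, w)
      have hu' : Uni (v + w) w := uni_addL hu
      have hG : Good T (v + w) w := by
        apply IH (v + w) w hu'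
        simp only [Prod.fst_add, Prod.snd_add]
        omega
      have := good_swap (good_subR hT (uni_swap hu') (good_swap hG))
      rwa [add_sub_cancel_right] at this
    · -- ‖v-w‖ < ‖v‖ : use pair (v-w, w)
      have hu' : Uni (v - w) w := uni_subL hu
      have hG : Good T (v - w) w := by
        apply IH (v - w) w hu'
        simp only [Prod.fst_sub, Prod.snd_sub]
        omega
      have := good_swap (good_addR hT (uni_swap hu') (good_swap hG))
      rwa [sub_add_cancel] at this
    · -- ‖w+v‖ < ‖w‖ : use pair (v, w+v)
      have hu' : Uni v (w + v) := by
        have := uni_addL (uni_swap hu); exact uni_swap this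
      have hG : Good T v (w + v) := by
        apply IH v (w + v) hu'
        simp only [Prod.fst_add, Prod.snd_add]
        omega
      have := good_subR hT hu' hG
      rwa [add_sub_cancel_right] at this
    · -- ‖w-v‖ < ‖w‖ : use pair (v, w-v)
      have hu' : Uni v (w - v) := by
        have := uni_subL (uni_swap hu); exact uni_swap this
      have hG : Good T v (w - v) := by
        apply IH v (w - v) hu'
        simp only [Prod.fst_sub, Prod.snd_sub]
        omega
      have := good_addR hT hu' hG
      rwa [sub_add_cancel] at this

end MK

namespace MK

variable {a b c : ℝ} {T : ℤ × ℤ → ℝ}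

/-- `DET v w > 0` when `w` is "counterclockwise" from `v` (w a larger rational slope). -/
def DET (v w : ℤ × ℤ) : ℤ := w.1 * v.2 - w.2 * v.1

lemma DET_eq_neg_udet (v w : ℤ × ℤ) : DET v w = - udet v w := by unfold DET udet; ring

lemma uni_of_DET {v w : ℤ × ℤ} (h : DET v w = 1) : Uni v w := by
  right; unfold DET at h; unfold udet; linarith

noncomputable def L (T : ℤ × ℤ → ℝ) (v : ℤ × ℤ) : ℝ := traceLength (T v)

lemma L_eq (v : ℤ × ℤ) : L T v = 2 * Real.log (phi (T v)) := rfl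

lemma T_gt2 (H : ∀ v w : ℤ × ℤ, Uni v w → Good T v w) {v : ℤ × ℤ}
    (h : Primitive v) : 2 < T v := by
  obtain ⟨p, q, hpq⟩ := h
  have hu : Uni v (-q, p) := by
    left; unfold udet; simp only; linear_combination hpq
  exact (H v _ hu).1

lemma phi_mul_bound {x y z : ℝ} (hx : 2 < x) (hz : 2 < z) (hy : 2 < y)
    (hmk : Mk x y z) : phi y < phi x * phi z := by
  set p := phi x with hp_def
  set r := phi z with hr_def
  have hp : 1 < p := one_lt_phi hx
  have hr : 1 < r := one_lt_phi hz
  have hpx : p + p⁻¹ = x := phi_add_inv hx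
  have hrz : r + r⁻¹ = z := phi_add_inv hz
  have hp0 : (0:ℝ) < p := by linarith
  have hr0 : (0:ℝ) < r := by linarith
  have hP : 1 < p * r := by nlinarith
  have hM : phi (p*r + (p*r)⁻¹) = p * r := phi_of hP
  have hy' : y * (x*z - y) = x^2 + z^2 := by unfold Mk at hmk; linear_combination -hmk
  have h1 : (p*r + (p*r)⁻¹) + (p*r⁻¹ + r*p⁻¹) = x*z := by
    rw [← hpx, ← hrz]; field_simp; ring
  have h2 : (p*r + (p*r)⁻¹) * (p*r⁻¹ + r*p⁻¹) = x^2 + z^2 - 4 := by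
    rw [← hpx, ← hrz]; field_simp; ring
  have key : (y - (p*r + (p*r)⁻¹)) * (y - (p*r⁻¹ + r*p⁻¹)) = -4 := by
    linear_combination (-1:ℝ)*hy' + (-y)*h1 + h2
  have hdiff : (p*r + (p*r)⁻¹) - (p*r⁻¹ + r*p⁻¹) = (p - p⁻¹) * (r - r⁻¹) := by
    field_simp; ring
  have hfac : 0 < (p - p⁻¹) * (r - r⁻¹) := by
    have : p⁻¹ < 1 := by rw [inv_lt_one_iff₀]; right; exact hp
    have : r⁻¹ < 1 := by rw [inv_lt_one_iff₀]; right; exact hr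
    apply mul_pos <;> nlinarith [inv_lt_one_iff₀ (a := p), inv_lt_one_iff₀ (a := r)]
  have hyM : y < p*r + (p*r)⁻¹ := by nlinarith [key, hdiff, hfac]
  calc phi y < phi (p*r + (p*r)⁻¹) := phi_lt_phi hy hyM
    _ = p * r := hM

lemma tri (H : ∀ v w : ℤ × ℤ, Uni v w → Good T v w) {v w : ℤ × ℤ}
    (hu : Uni v w) : L T (v + w) < L T v + L T w := by
  obtain ⟨h1, h2, h3, h4⟩ := H v w hu
  have hphi : phi (T (v+w)) < phi (T v) * phi (T w) := phi_mul_bound h1 h2 h3 h4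
  have l1 : Real.log (phi (T (v+w))) < Real.log (phi (T v) * phi (T w)) :=
    Real.log_lt_log (phi_pos h3) hphi
  rw [Real.log_mul (ne_of_gt (phi_pos h1)) (ne_of_gt (phi_pos h2))] at l1
  simp only [L_eq]
  linarith

def comb (s t : ℤ) (v w : ℤ × ℤ) : ℤ × ℤ := (s*v.1 + t*w.1, s*v.2 + t*w.2)

lemma uni_addR2 {v w : ℤ × ℤ} (h : Uni v w) : Uni v (v + w) := by
  unfold Uni udet at *
  simp only [Prod.fst_add, Prod.snd_add]
  rcases h with h | h
  · left; linear_combination h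
  · right; linear_combination h

lemma lemA (H : ∀ v w : ℤ × ℤ, Uni v w → Good T v w) :
    ∀ n : ℕ, ∀ s t : ℤ, 1 ≤ s → 1 ≤ t → IsCoprime s t → (s + t).toNat ≤ n →
    ∀ v w : ℤ × ℤ, Uni v w → L T (comb s t v w) < s * L T v + t * L T w := by
  intro n
  induction n with
  | zero => intro s t hs ht _ hn; omega
  | succ n IH =>
    intro s t hs ht hco hn v w hu
    rcases lt_trichotomy s t with hst | hst | hst
    · -- s < t : recurse on (s, t-s) with pair (v+w, w)
      have hco' : IsCoprime s (t - s) := by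
        have := IsCoprime.add_mul_left_right hco (-1)
        simpa [mul_comm, sub_eq_add_neg] using this
      have hcomb : comb s (t - s) (v + w) w = comb s t v w := by
        unfold comb
        simp only [Prod.fst_add, Prod.snd_add, Prod.ext_iff]
        constructor <;> ring
      have hrec := IH s (t - s) hs (by omega) hco' (by omega) (v + w) w (uni_addL hu)
      rw [hcomb] at hrec
      have htri := tri H hu
      have hts : (0:ℝ) < (s : ℤ) := by exact_mod_cast (by omega : (0:ℤ) < s)
      have := mul_lt_mul_of_pos_left htri hts
      push_cast at hrec ⊢
      nlinarith [hrec, this]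
    · -- s = t : both 1
      have hs1 : s = 1 := by
        obtain ⟨u, vv, h1⟩ := hco
        have hd : s ∣ 1 := ⟨u + vv, by rw [← hst] at h1; linear_combination -h1⟩
        have := Int.isUnit_iff.mp (isUnit_of_dvd_one hd)
        omega
      subst hst
      rw [hs1]
      have hcomb : comb 1 1 v w = v + w := by
        unfold comb; simp [Prod.ext_iff]
      rw [hcomb]
      have := tri H hu
      push_cast
      linarith
    · -- t < s : recurse on (s - t, t) with pair (v, v+w)
      have hco' : IsCoprime (s - t) t := by
        have := IsCoprime.add_mul_right_left hco (-1)
        simpa [mul_comm, sub_eq_add_neg] using this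
      have hcomb : comb (s - t) t v (v + w) = comb s t v w := by
        unfold comb
        simp only [Prod.fst_add, Prod.snd_add, Prod.ext_iff]
        constructor <;> ring
      have hrec := IH (s - t) t (by omega) ht hco' (by omega) v (v + w) (uni_addR2 hu)
      rw [hcomb] at hrec
      have htri := tri H hu
      have hts : (0:ℝ) < (t : ℤ) := by exact_mod_cast (by omega : (0:ℤ) < t)
      have := mul_lt_mul_of_pos_left htri hts
      push_cast at hrec ⊢
      nlinarith [hrec, this]

end MK

namespace MK

variable {a b c : ℝ} {T : ℤ × ℤ → ℝ}

lemma line_lemma (hT : IsTraceFunction a b c T)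
    (H : ∀ v w : ℤ × ℤ, Uni v w → Good T v w) {P W : ℤ × ℤ}
    (hPW : DET P W = 1) (κ : ℕ) :
    (κ:ℝ) * L T W < L T P + L T (comb (-1) (κ:ℤ) P W) := by
  unfold DET at hPW
  set vec : ℕ → ℤ × ℤ := fun m => ((m:ℤ)*W.1 - P.1, (m:ℤ)*W.2 - P.2) with hvec
  have hcomb : comb (-1) (κ:ℤ) P W = vec κ := by
    unfold comb; simp only [hvec, Prod.ext_iff]; constructor <;> ring
  rw [hcomb]
  have huM : ∀ m : ℕ, Uni (vec m) W := by
    intro m; left; unfold udet; simp only [hvec]; linear_combination hPW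
  have hprimW : Primitive W := prim_right (huM 0)
  have hprimP : Primitive P := by
    have : Uni P W := by right; unfold udet; linear_combination -hPW
    exact prim_left this
  have hvec0 : vec 0 = -P := by simp [hvec, Prod.ext_iff]
  have hT0 : T (vec 0) = T P := by rw [hvec0]; exact hT.neg_eq P hprimP
  have huP : Uni (-P) W := by
    left; unfold udet; simp only [Prod.fst_neg, Prod.snd_neg]; linear_combination hPW
  have hG := H (-P) W huP
  have hvec1 : -P + W = vec 1 := by simp [hvec, Prod.ext_iff]; constructor <;> ring
  have h2W : 2 < T W := hG.2.1
  have h2t : ∀ m : ℕ, 2 < T (vec m) := fun m => (H (vec m) W (huM m)).1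
  -- recursion
  have hrec : ∀ m : ℕ, T (vec (m+2)) = T (vec (m+1)) * T W - T (vec m) := by
    intro m
    have hu' := huM (m+1)
    have h5 := hT.add_rule (vec (m+1)) W (prim_left hu') (prim_right hu') hu'
    have e1 : vec (m+1) + W = vec (m+2) := by
      simp only [hvec, Prod.ext_iff, Prod.fst_add, Prod.snd_add]
      push_cast; constructor <;> ring
    have e2 : vec (m+1) - W = vec m := by
      simp only [hvec, Prod.ext_iff, Prod.fst_sub, Prod.snd_sub]
      push_cast; constructor <;> ring
    rw [e1, e2] at h5
    exact h5
  set lam := phi (T W) with hlam_def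
  have hlam : 1 < lam := one_lt_phi h2W
  have hlam0 : (0:ℝ) < lam := by linarith
  have hlamne : lam ≠ 0 := ne_of_gt hlam0
  have hadd : lam + lam⁻¹ = T W := phi_add_inv h2W
  set u := lam⁻¹ with hu_def
  have huu : lam * u = 1 := mul_inv_cancel₀ hlamne
  have hu0 : (0:ℝ) < u := by positivity
  have hs0 : (0:ℝ) < lam - u := by
    have : u < 1 := by rw [hu_def, inv_lt_one_iff₀]; right; exact hlam
    linarith
  have hsne : lam - u ≠ 0 := ne_of_gt hs0
  set A := (T (vec 1) - T (vec 0) * u) / (lam - u) with hA_def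
  set B := (T (vec 0) * lam - T (vec 1)) / (lam - u) with hB_def
  -- Markoff relation for (t0, t1, TW)
  have hMk : (T (vec 0))^2 + (T (vec 1))^2 + (T W)^2 = T (vec 0) * T (vec 1) * T W := by
    have := hG.2.2.2
    unfold Mk at this
    rw [hvec1] at this
    rw [hvec0]
    linear_combination this
  -- closed form
  have closed : ∀ m : ℕ, T (vec m) = A * lam^m + B * u^m := by
    intro m
    induction m using Nat.strong_induction_on with
    | _ m IH =>
      match m with
      | 0 =>
        simp only [pow_zero, mul_one]
        rw [hA_def, hB_def]
        field_simp
        ring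
      | 1 =>
        simp only [pow_one]
        rw [hA_def, hB_def]
        field_simp
        ring
      | (m+2) =>
        rw [hrec m, IH (m+1) (by omega), IH m (by omega), ← hadd]
        linear_combination (A * lam^m + B * u^m) * huu
  -- A*B = TW^2/(TW^2-4) > 1
  have hABs : A * B * (lam - u)^2 = (T W)^2 := by
    have hAs : A * (lam - u) = T (vec 1) - T (vec 0) * u := by
      rw [hA_def]; field_simp
    have hBs : B * (lam - u) = T (vec 0) * lam - T (vec 1) := by
      rw [hB_def]; field_simp
    have expand : A * B * (lam - u)^2
        = (T (vec 1) - T (vec 0) * u) * (T (vec 0) * lam - T (vec 1)) := by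
      calc A * B * (lam - u)^2 = (A * (lam - u)) * (B * (lam - u)) := by ring
        _ = _ := by rw [hAs, hBs]
    rw [expand]
    linear_combination (T (vec 0) * T (vec 1)) * hadd + (-(T (vec 0))^2) * huu + (-1:ℝ) * hMk
  have hs2 : (lam - u)^2 = (T W)^2 - 4 := by
    linear_combination (lam + u + T W) * hadd + (-4:ℝ) * huu
  have hABgt1 : 1 < A * B := by
    have h4 : 0 < (T W)^2 - 4 := by nlinarith
    rw [hs2] at hABs
    have : A * B = (T W)^2 / ((T W)^2 - 4) := by
      field_simp at hABs ⊢
      linarith [hABs]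
    rw [this]
    rw [lt_div_iff₀ h4]
    nlinarith
  have hApos : 0 < A := by
    have hsum : A + B = T (vec 0) := by
      have := closed 0
      simp only [pow_zero, mul_one] at this
      linarith
    nlinarith [h2t 0]
  have hBpos : 0 < B := by
    have hsum : A + B = T (vec 0) := by
      have := closed 0
      simp only [pow_zero, mul_one] at this
      linarith
    nlinarith [h2t 0]
  -- the key sqrt bounds
  have hlu_pow : ∀ m : ℕ, lam^m * u^m = 1 := by
    intro m; rw [← mul_pow, huu, one_pow]
  have hsq : ∀ m : ℕ, (A*lam^m - B*u^m)^2 < (T (vec m))^2 - 4 := by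
    intro m
    rw [closed m]
    nlinarith [hlu_pow m, hABgt1, pow_pos hlam0 m, pow_pos hu0 m]
  have phiA : ∀ m : ℕ, A * lam^m < phi (T (vec m)) := by
    intro m
    have h1 := lt_phi_of_sq (hsq m)
    have h2 : (T (vec m) + (A*lam^m - B*u^m)) / 2 = A * lam^m := by
      rw [closed m]; ring
    rwa [h2] at h1
  have phiB : ∀ m : ℕ, B * u^m < phi (T (vec m)) := by
    intro m
    have hsq' : (B*u^m - A*lam^m)^2 < (T (vec m))^2 - 4 := by
      have := hsq m; nlinarith [this]
    have h1 := lt_phi_of_sq hsq'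
    have h2 : (T (vec m) + (B*u^m - A*lam^m)) / 2 = B * u^m := by
      rw [closed m]; ring
    rwa [h2] at h1
  -- conclude
  have hb0 : B < phi (T (vec 0)) := by
    have := phiB 0; simpa using this
  have hak : A * lam^κ < phi (T (vec κ)) := phiA κ
  have hprod : lam^κ < phi (T (vec 0)) * phi (T (vec κ)) := by
    have h1 : B * (A * lam^κ) < phi (T (vec 0)) * phi (T (vec κ)) :=
      mul_lt_mul'' hb0 hak (le_of_lt hBpos) (by positivity)
    nlinarith [pow_pos hlam0 κ, hABgt1]
  have hlog : Real.log (lam^κ) < Real.log (phi (T (vec 0)) * phi (T (vec κ))) :=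
    Real.log_lt_log (pow_pos hlam0 κ) hprod
  rw [Real.log_pow, Real.log_mul (ne_of_gt (phi_pos (h2t 0))) (ne_of_gt (phi_pos (h2t κ)))] at hlog
  have hL0 : L T P = 2 * Real.log (phi (T (vec 0))) := by rw [L_eq, hT0]
  rw [hL0, L_eq, L_eq]
  push_cast
  linarith [hlog]

end MK

namespace MK

variable {a b c : ℝ} {T : ℤ × ℤ → ℝ}

lemma cramer1 (A B D : ℤ × ℤ) : DET A B * D.1 + DET B D * A.1 = DET A D * B.1 := by
  unfold DET; ring

lemma cramer2 (A B D : ℤ × ℤ) : DET A B * D.2 + DET B D * A.2 = DET A D * B.2 := by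
  unfold DET; ring

lemma pluck (A B C D : ℤ × ℤ) :
    DET A C * DET B D = DET A B * DET C D + DET A D * DET B C := by
  unfold DET; ring

lemma DET_antisymm (A B : ℤ × ℤ) : DET A B = - DET B A := by unfold DET; ring

lemma DET_self (A : ℤ × ℤ) : DET A A = 0 := by unfold DET; ring

def ChainP (l : List (ℤ × ℤ)) : Prop :=
  l.Chain' (fun p q => DET p q = 1) ∧ l.Pairwise (fun p q => 1 ≤ DET p q) ∧
    ∀ p ∈ l, Primitive p

lemma lastMem {α : Type*} : ∀ (l : List α) (C : α), l.getLast? = some C → C ∈ l := by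
  intro l
  induction l with
  | nil => intro C hC; simp at hC
  | cons A t IH =>
    intro C hC
    cases t with
    | nil => simp at hC; simp [hC]
    | cons B t' =>
      rw [List.getLast?_cons_cons] at hC
      exact List.mem_cons_of_mem _ (IH C hC)

lemma mem_last_rel {α : Type*} {R : α → α → Prop} :
    ∀ l : List α, l.Pairwise R → ∀ x ∈ l, ∀ C, l.getLast? = some C → x = C ∨ R x C := by
  intro l
  induction l with
  | nil => intro _ x hx; simp at hx
  | cons A t IH =>
    intro hp x hx C hC
    cases t with
    | nil =>
      simp at hx hC
      subst hx; subst hC; left; rfl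
    | cons B t' =>
      have hC' : (B :: t').getLast? = some C := by
        rwa [List.getLast?_cons_cons] at hC
      have hCmem : C ∈ B :: t' := lastMem _ _ hC'
      rcases List.mem_cons.mp hx with h | h
      · subst h
        right
        exact (List.pairwise_cons.mp hp).1 C hCmem
      · exact IH (List.pairwise_cons.mp hp).2 x h C hC'

lemma chain_exists : ∀ n : ℕ, ∀ X Z : ℤ × ℤ, Primitive X → Primitive Z →
    1 ≤ DET X Z → (DET X Z).toNat ≤ n →
    ∃ l : List (ℤ × ℤ), ChainP l ∧ l.head? = some X ∧ l.getLast? = some Z := by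
  intro n
  induction n with
  | zero => intro X Z _ _ h1 hn; omega
  | succ n IH =>
    intro X Z hX hZ h1 hn
    by_cases hc1 : DET X Z = 1
    · refine ⟨[X, Z], ⟨?_, ?_, ?_⟩, rfl, rfl⟩
      · exact List.isChain_cons_cons.mpr ⟨hc1, List.isChain_singleton Z⟩
      · exact List.pairwise_cons.mpr ⟨by intro y hy; simp at hy; subst hy; omega,
          List.pairwise_singleton _ Z⟩
      · intro p hp; simp at hp; rcases hp with h | h <;> subst h <;> assumption
    · -- DET X Z ≥ 2
      have hc2 : 2 ≤ DET X Z := by omega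
      obtain ⟨p, q, hpq⟩ := hX
      set W0 : ℤ × ℤ := (q, -p) with hW0
      have hXW0 : DET X W0 = 1 := by
        unfold DET; simp only [hW0]; linear_combination hpq
      set e0 := DET W0 Z with he0
      set cc := DET X Z with hcc
      set k := e0 / cc with hk
      set r := e0 % cc with hr
      have hr_eq : e0 = r + cc * k := by rw [hr, hk]; exact (Int.emod_add_mul_ediv e0 cc).symm
      have hr0 : 0 ≤ r := Int.emod_nonneg e0 (by omega)
      have hrlt : r < cc := Int.emod_lt_of_pos e0 (by omega)
      set W : ℤ × ℤ := (W0.1 - k*X.1, W0.2 - k*X.2) with hWdef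
      have hXW : DET X W = 1 := by
        unfold DET at hXW0 ⊢
        simp only [hWdef]
        linear_combination hXW0
      have hWZ : DET W Z = r := by
        unfold DET at hXW0 he0 hcc ⊢
        simp only [hWdef]
        linear_combination hr_eq - he0 + k * hcc
      have hrne : r ≠ 0 := by
        intro h0
        have hz1 : Z.1 = cc * W.1 := by
          have := cramer1 X W Z
          rw [hXW, hWZ, h0] at this
          linear_combination this
        have hz2 : Z.2 = cc * W.2 := by
          have := cramer2 X W Z
          rw [hXW, hWZ, h0] at this
          linear_combination this
        obtain ⟨p', q', hpq'⟩ := hZ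
        have hdvd : cc ∣ 1 := ⟨p' * W.1 + q' * W.2, by
          rw [← hpq', hz1, hz2]; ring⟩
        have := Int.isUnit_iff.mp (isUnit_of_dvd_one hdvd)
        omega
      have hprimW : Primitive W := prim_right (uni_of_DET hXW)
      have h1r : 1 ≤ DET W Z := by omega
      obtain ⟨l', hl', hhead, hlast⟩ := IH W Z hprimW hZ h1r (by omega)
      cases l' with
      | nil => simp at hhead
      | cons W' t =>
        have hW' : W' = W := by simpa using hhead
        subst hW'
        refine ⟨X :: W :: t, ⟨?_, ?_, ?_⟩, rfl, ?_⟩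
        · exact List.isChain_cons_cons.mpr ⟨hXW, hl'.1⟩
        · apply List.pairwise_cons.mpr
          refine ⟨?_, hl'.2.1⟩
          intro U hU
          rcases List.mem_cons.mp hU with h | h
          · subst h; omega
          · -- U in t
            have hWU : 1 ≤ DET W U := (List.pairwise_cons.mp hl'.2.1).1 U h
            have hUZ : U = Z ∨ 1 ≤ DET U Z :=
              mem_last_rel _ hl'.2.1 U (List.mem_cons_of_mem _ h) Z hlast
            have hpl := pluck X W U Z
            rw [hXW, hWZ] at hpl
            rcases hUZ with hUZ | hUZ
            · subst hUZ; omega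
            · nlinarith [hpl, hWU, hUZ, hr0]
        · intro pp hpp
          rcases List.mem_cons.mp hpp with h | h
          · subst h; exact ⟨p, q, hpq⟩
          · exact hl'.2.2 pp h
        · rw [List.getLast?_cons_cons]
          exact hlast

lemma chainP_tail {A : ℤ × ℤ} {l : List (ℤ × ℤ)} (h : ChainP (A :: l)) : ChainP l :=
  ⟨h.1.tail, (List.pairwise_cons.mp h.2.1).2, fun p hp => h.2.2 p (List.mem_cons_of_mem _ hp)⟩

lemma conv_chain (hT : IsTraceFunction a b c T)
    (H : ∀ v w : ℤ × ℤ, Uni v w → Good T v w) :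
    ∀ (l : List (ℤ × ℤ)) (A C : ℤ × ℤ), ChainP (A :: l) →
      (A :: l).getLast? = some C →
      ∀ U ∈ A :: l,
        ((DET A C : ℝ) * L T U ≤ DET U C * L T A + DET A U * L T C) ∧
        (U ≠ A → U ≠ C → (DET A C : ℝ) * L T U < DET U C * L T A + DET A U * L T C) := by
  intro l
  induction l with
  | nil =>
    intro A C hch hlast U hU
    simp at hlast hU
    subst hlast; subst hU
    constructor
    · simp [DET_self]
    · intro h; exact absurd rfl h
  | cons B t IH =>
    intro A C hch hlast U hU
    have hAB : DET A B = 1 := (List.isChain_cons_cons.mp hch.1).1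
    have hlast' : (B :: t).getLast? = some C := by
      rwa [List.getLast?_cons_cons] at hlast
    have hchBt : ChainP (B :: t) := chainP_tail hch
    cases t with
    | nil =>
      -- chain is [A, B], C = B
      have hCB : C = B := by simpa using hlast'.symm
      subst hCB
      rcases List.mem_cons.mp hU with h | h
      · subst h
        constructor
        · simp [DET_self]
        · intro h; exact absurd rfl h
      · simp at h
        subst h
        constructor
        · simp [DET_self]
        · intro _ h; exact absurd rfl h
    | cons D t' =>
      have hBD : DET B D = 1 := (List.isChain_cons_cons.mp hchBt.1).1
      have hCmem : C ∈ B :: D :: t' := lastMem _ _ hlast'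
      have hCmem' : C ∈ D :: t' := by
        rcases List.mem_cons.mp hCmem with h | h
        · exfalso
          -- C = B impossible: pairwise B < C with C in D::t' would give DET B B ≥ 1
          subst h
          have hCl : C ∈ D :: t' := lastMem _ _ (by
            rwa [List.getLast?_cons_cons] at hlast')
          have := (List.pairwise_cons.mp hchBt.2.1).1 C hCl
          simp [DET_self] at this
        · exact h
      have hBC : 1 ≤ DET B C := (List.pairwise_cons.mp hchBt.2.1).1 C hCmem'
      have hAC : 1 ≤ DET A C :=
        (List.pairwise_cons.mp hch.2.1).1 C (List.mem_cons_of_mem _ hCmem')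
      have hAD : 1 ≤ DET A D :=
        (List.pairwise_cons.mp hch.2.1).1 D (by simp)
      -- local convexity at B : DET A D * L B < L A + L D
      have hloc : (DET A D : ℝ) * L T B < L T A + L T D := by
        have hDcomb : comb (-1) ((DET A D).toNat : ℤ) A B = D := by
          have h1 := cramer1 A B D
          have h2 := cramer2 A B D
          rw [hAB, hBD] at h1 h2
          have ht : ((DET A D).toNat : ℤ) = DET A D := Int.toNat_of_nonneg (by omega)
          unfold comb
          rw [ht]
          simp only [Prod.ext_iff]
          constructor <;> [linarith [h1]; linarith [h2]]
        have := line_lemma hT H (by rwa [DET] at hAB : DET A B = 1) (DET A D).toNat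
        rw [hDcomb] at this
        have ht' : ((DET A D).toNat : ℝ) = ((DET A D : ℤ) : ℝ) := by
          norm_cast; omega
        rwa [ht'] at this
      -- B below chord (A, C)
      have hBbelow : (DET A C : ℝ) * L T B < DET B C * L T A + DET A B * L T C := by
        by_cases hDC : D = C
        · subst hDC
          have hBD1 : ((DET B D : ℤ) : ℝ) = 1 := by exact_mod_cast hBD
          have hAB1 : ((DET A B : ℤ) : ℝ) = 1 := by exact_mod_cast hAB
          rw [hBD1, hAB1]
          linarith [hloc]
        · have hDmem : D ∈ B :: D :: t' := by simp
          have hDneB : D ≠ B := by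
            intro h; rw [h, DET_self] at hBD; omega
          have hD := (IH B C hchBt hlast' D hDmem).2 hDneB hDC
          -- glue
          have hpl := pluck A B D C
          have hBD1 : ((DET B D : ℤ) : ℝ) = 1 := by exact_mod_cast hBD
          have hAB1 : ((DET A B : ℤ) : ℝ) = 1 := by exact_mod_cast hAB
          have hplR : ((DET A D : ℤ):ℝ) * (DET B C : ℤ) =
              ((DET A B : ℤ):ℝ) * (DET D C : ℤ) + ((DET A C : ℤ):ℝ) * (DET B D : ℤ) := by
            exact_mod_cast congrArg (fun n : ℤ => (n : ℝ)) hpl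
          rw [hAB1, hBD1, one_mul, mul_one] at hplR
          rw [hBD1, one_mul] at hD
          rw [hAB1]
          have hBCpos : (0:ℝ) < ((DET B C : ℤ):ℝ) := by exact_mod_cast hBC
          have h1 := mul_lt_mul_of_pos_left hloc hBCpos
          have h3 := congrArg (fun x : ℝ => x * L T B) hplR
          nlinarith [h1, hD, h3]
      rcases List.mem_cons.mp hU with h | h
      · subst h
        constructor
        · simp [DET_self]
        · intro h; exact absurd rfl h
      · -- U ∈ B :: D :: t'
        by_cases hUC : U = C
        · subst hUC
          constructor
          · simp [DET_self]
          · intro _ h; exact absurd rfl h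
        · have hUle := (IH B C hchBt hlast' U h).1
          have hUCd : 1 ≤ DET U C := by
            have := mem_last_rel _ hchBt.2.1 U h C hlast'
            rcases this with h' | h'
            · exact absurd h' hUC
            · exact h'
          have hBU : 0 ≤ DET B U := by
            rcases List.mem_cons.mp h with h' | h'
            · subst h'; simp [DET_self]
            · exact le_of_lt (by exact_mod_cast (List.pairwise_cons.mp hchBt.2.1).1 U h')
          have hstrict : (DET A C : ℝ) * L T U < DET U C * L T A + DET A U * L T C := by
            have hpl := pluck A B U C
            have hACnn : (0:ℝ) ≤ ((DET A C : ℤ):ℝ) := by exact_mod_cast le_trans zero_le_one hAC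
            have hUCpos : (0:ℝ) < ((DET U C : ℤ):ℝ) := by exact_mod_cast hUCd
            have hBCpos : (0:ℝ) < ((DET B C : ℤ):ℝ) := by exact_mod_cast hBC
            have hAB1 : ((DET A B : ℤ) : ℝ) = 1 := by exact_mod_cast hAB
            have h1 := mul_le_mul_of_nonneg_left hUle hACnn
            have h2 := mul_lt_mul_of_pos_left hBbelow hUCpos
            rw [hAB1, one_mul] at h2
            have hplR : ((DET A U : ℤ):ℝ) * (DET B C : ℤ) =
                ((DET A B : ℤ):ℝ) * (DET U C : ℤ) + ((DET A C : ℤ):ℝ) * (DET B U : ℤ) := by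
              exact_mod_cast congrArg (fun n : ℤ => (n : ℝ)) hpl
            rw [hAB1, one_mul] at hplR
            have h3 := congrArg (fun x : ℝ => x * L T C) hplR
            have key : ((DET B C : ℤ):ℝ) * ((DET A C : ℤ) * L T U) <
                ((DET B C : ℤ):ℝ) * (((DET U C : ℤ):ℝ) * L T A + ((DET A U : ℤ):ℝ) * L T C) := by
              nlinarith [h1, h2, h3]
            exact lt_of_mul_lt_mul_left key (le_of_lt hBCpos)
          exact ⟨le_of_lt hstrict, fun _ _ => hstrict⟩

end MK

namespace MK

variable {a b c : ℝ} {T : ℤ × ℤ → ℝ}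

lemma loc : ∀ (l : List (ℤ × ℤ)), ChainP l → ∀ X Z Y : ℤ × ℤ,
    l.head? = some X → l.getLast? = some Z → 1 ≤ DET X Y → 1 ≤ DET Y Z →
    ∃ U ∈ l, ∃ V ∈ l, DET U V = 1 ∧ 1 ≤ DET U Y ∧ 0 ≤ DET Y V := by
  intro l
  induction l with
  | nil => intro _ X Z Y h; simp at h
  | cons A t IH =>
    intro hch X Z Y hhead hlast hXY hYZ
    have hAX : A = X := by simpa using hhead
    rw [← hAX] at hXY
    cases t with
    | nil =>
      exfalso
      have hZA : A = Z := by simpa using hlast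
      rw [← hZA] at hYZ
      have := DET_antisymm A Y
      omega
    | cons V t' =>
      by_cases hv : 0 ≤ DET Y V
      · refine ⟨A, by simp, V, by simp, ?_, hXY, hv⟩
        exact (List.isChain_cons_cons.mp hch.1).1
      · push_neg at hv
        have h1 : 1 ≤ DET V Y := by
          have := DET_antisymm Y V
          omega
        have hlast2 : (V :: t').getLast? = some Z := by
          rwa [List.getLast?_cons_cons] at hlast
        obtain ⟨U, hU, V', hV', h2, h3, h4⟩ :=
          IH (chainP_tail hch) V Z Y rfl hlast2 h1 hYZ
        exact ⟨U, List.mem_cons_of_mem _ hU, V', List.mem_cons_of_mem _ hV', h2, h3, h4⟩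

theorem main_ineq (hT : IsTraceFunction a b c T)
    (H : ∀ v w : ℤ × ℤ, Uni v w → Good T v w) {X Y Z : ℤ × ℤ}
    (hX : Primitive X) (hY : Primitive Y) (hZ : Primitive Z)
    (hXY : 1 ≤ DET X Y) (hYZ : 1 ≤ DET Y Z) (hXZ : 1 ≤ DET X Z) :
    (DET X Z : ℝ) * L T Y < (DET Y Z : ℝ) * L T X + (DET X Y : ℝ) * L T Z := by
  obtain ⟨l, hch, hhead, hlast⟩ := chain_exists (DET X Z).toNat X Z hX hZ hXZ le_rfl
  obtain ⟨U, hUmem, V, hVmem, hUV, hUY, hYV⟩ := loc l hch X Z Y hhead hlast hXY hYZ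
  cases l with
  | nil => simp at hhead
  | cons A rest =>
    have hAX : A = X := by simpa using hhead
    rw [← hAX] at hXY hXZ ⊢
    have hconv := conv_chain hT H rest A Z hch hlast
    set aa := DET Y V with haa
    set bb := DET U Y with hbb
    have hY1 : Y.1 = bb * V.1 + aa * U.1 := by
      have h := cramer1 U Y V
      rw [hUV] at h
      linarith
    have hY2 : Y.2 = bb * V.2 + aa * U.2 := by
      have h := cramer2 U Y V
      rw [hUV] at h
      linarith
    obtain ⟨pp, qq, hco⟩ := hY
    rcases eq_or_lt_of_le hYV with haz | hap
    · -- aa = 0, so Y = V (a chain vertex)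
      have haz' : aa = 0 := haz.symm
      rw [haz'] at hY1 hY2
      have hbdvd : bb ∣ 1 := ⟨pp * V.1 + qq * V.2, by
        rw [← hco, hY1, hY2]; ring⟩
      have hb1 : bb = 1 := by
        have := Int.isUnit_iff.mp (isUnit_of_dvd_one hbdvd)
        omega
      rw [hb1] at hY1 hY2
      have hYeqV : Y = V := Prod.ext (by linarith) (by linarith)
      have hVneX : V ≠ A := by
        intro h
        rw [hYeqV, h, DET_self] at hXY
        omega
      have hVneZ : V ≠ Z := by
        intro h
        rw [hYeqV, h, DET_self] at hYZ
        omega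
      rw [hYeqV]
      exact (hconv V hVmem).2 hVneX hVneZ
    · -- aa ≥ 1 : strictly inside the subcone (U,V)
      have hbb1 : 1 ≤ bb := hUY
      have hcoab : IsCoprime aa bb :=
        ⟨pp * U.1 + qq * U.2, pp * V.1 + qq * V.2, by
          linear_combination hco - pp * hY1 - qq * hY2⟩
      have hcomb : comb aa bb U V = Y := by
        unfold comb
        simp only [Prod.ext_iff]
        constructor <;> linarith
      have hA := lemA H ((aa + bb).toNat) aa bb (by omega) hbb1 hcoab le_rfl U V
        (uni_of_DET hUV)
      rw [hcomb] at hA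
      have hbU := (hconv U hUmem).1
      have hbV := (hconv V hVmem).1
      have hid1 : DET Y Z = aa * DET U Z + bb * DET V Z := by
        unfold DET
        linear_combination Z.1 * hY2 - Z.2 * hY1
      have hid2 : DET A Y = aa * DET A U + bb * DET A V := by
        unfold DET
        linear_combination A.2 * hY1 - A.1 * hY2
      -- move to ℝ
      have hXZpos : (0:ℝ) < ((DET A Z : ℤ) : ℝ) := by exact_mod_cast hXZ
      have haaR : (0:ℝ) ≤ ((aa : ℤ) : ℝ) := by exact_mod_cast le_of_lt hap
      have hbbR : (0:ℝ) ≤ ((bb : ℤ) : ℝ) := by exact_mod_cast le_trans zero_le_one hbb1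
      have s1 := mul_lt_mul_of_pos_left hA hXZpos
      have s2 := mul_le_mul_of_nonneg_left hbU haaR
      have s3 := mul_le_mul_of_nonneg_left hbV hbbR
      have hid1R : ((DET Y Z : ℤ):ℝ) = (aa:ℝ) * (DET U Z : ℤ) + (bb:ℝ) * (DET V Z : ℤ) := by
        exact_mod_cast congrArg (fun n : ℤ => (n : ℝ)) hid1
      have hid2R : ((DET A Y : ℤ):ℝ) = (aa:ℝ) * (DET A U : ℤ) + (bb:ℝ) * (DET A V : ℤ) := by
        exact_mod_cast congrArg (fun n : ℤ => (n : ℝ)) hid2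
      have h4 := congrArg (fun x : ℝ => x * L T A) hid1R
      have h5 := congrArg (fun x : ℝ => x * L T Z) hid2R
      nlinarith [s1, s2, s3, h4, h5]

end MK

namespace MK

lemma rat_prim (q : ℚ) : Primitive (q.num, (q.den : ℤ)) := by
  have h := q.reduced
  apply Int.isCoprime_iff_gcd_eq_one.mpr
  simpa [Int.gcd] using h

end MK

/-- For a Markoff triple of reals `(a,b,c)` with trace function `T`, the function `F`
is strictly convex on the rationals of `[0,1]`: for rationals `0 ≤ x < y < z ≤ 1`,
`(F(y) − F(x))·(z − y) < (F(z) − F(y))·(y − x)`. -/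
theorem F_strictly_convex (a b c : ℝ) (ha : 2 < a) (hb : 2 < b) (hc : 2 < c)
    (habc : a ^ 2 + b ^ 2 + c ^ 2 = a * b * c)
    (T : ℤ × ℤ → ℝ) (hT : IsTraceFunction a b c T) :
    ∀ x y z : ℚ, 0 ≤ x → x < y → y < z → z ≤ 1 →
      (Ffun T y - Ffun T x) * ((z : ℝ) - (y : ℝ)) <
        (Ffun T z - Ffun T y) * ((y : ℝ) - (x : ℝ)) := by
  intro x y z _ hxy hyz _
  have H := MK.good_all hT ha hb hc habc
  set X : ℤ × ℤ := (x.num, (x.den : ℤ)) with hXdef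
  set Y : ℤ × ℤ := (y.num, (y.den : ℤ)) with hYdef
  set Z : ℤ × ℤ := (z.num, (z.den : ℤ)) with hZdef
  have hqx0 : (0:ℝ) < (x.den : ℝ) := by exact_mod_cast x.pos
  have hx0 : (x.den:ℝ) ≠ 0 := ne_of_gt hqx0
  have hqy0 : (0:ℝ) < (y.den : ℝ) := by exact_mod_cast y.pos
  have hy0 : (y.den:ℝ) ≠ 0 := ne_of_gt hqy0
  have hqz0 : (0:ℝ) < (z.den : ℝ) := by exact_mod_cast z.pos
  have hz0 : (z.den:ℝ) ≠ 0 := ne_of_gt hqz0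
  have hDxy : ((MK.DET X Y : ℤ):ℝ) = (y.num:ℝ)*(x.den:ℝ) - (y.den:ℝ)*(x.num:ℝ) := by
    unfold MK.DET; rw [hXdef, hYdef]; push_cast; ring
  have hDyz : ((MK.DET Y Z : ℤ):ℝ) = (z.num:ℝ)*(y.den:ℝ) - (z.den:ℝ)*(y.num:ℝ) := by
    unfold MK.DET; rw [hYdef, hZdef]; push_cast; ring
  have hDxz : ((MK.DET X Z : ℤ):ℝ) = (z.num:ℝ)*(x.den:ℝ) - (z.den:ℝ)*(x.num:ℝ) := by
    unfold MK.DET; rw [hXdef, hZdef]; push_cast; ring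
  have hyx' : ((y:ℝ) - (x:ℝ)) * ((x.den:ℝ)*(y.den:ℝ)) = ((MK.DET X Y : ℤ):ℝ) := by
    rw [hDxy, Rat.cast_def, Rat.cast_def]
    field_simp
  have hyx : ((y:ℝ) - (x:ℝ)) = ((MK.DET X Y : ℤ):ℝ) / ((x.den:ℝ)*(y.den:ℝ)) :=
    (eq_div_iff (by positivity)).mpr hyx'
  have hzy' : ((z:ℝ) - (y:ℝ)) * ((y.den:ℝ)*(z.den:ℝ)) = ((MK.DET Y Z : ℤ):ℝ) := by
    rw [hDyz, Rat.cast_def, Rat.cast_def]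
    field_simp
  have hzy : ((z:ℝ) - (y:ℝ)) = ((MK.DET Y Z : ℤ):ℝ) / ((y.den:ℝ)*(z.den:ℝ)) :=
    (eq_div_iff (by positivity)).mpr hzy'
  have hzx' : ((z:ℝ) - (x:ℝ)) * ((x.den:ℝ)*(z.den:ℝ)) = ((MK.DET X Z : ℤ):ℝ) := by
    rw [hDxz, Rat.cast_def, Rat.cast_def]
    field_simp
  have hzx : ((z:ℝ) - (x:ℝ)) = ((MK.DET X Z : ℤ):ℝ) / ((x.den:ℝ)*(z.den:ℝ)) :=
    (eq_div_iff (by positivity)).mpr hzx'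
  have hxyR : (x:ℝ) < (y:ℝ) := by exact_mod_cast hxy
  have hyzR : (y:ℝ) < (z:ℝ) := by exact_mod_cast hyz
  have hxzR : (x:ℝ) < (z:ℝ) := lt_trans hxyR hyzR
  have hXY : 1 ≤ MK.DET X Y := by
    have h1 : (0:ℝ) < ((MK.DET X Y : ℤ):ℝ) / ((x.den:ℝ)*(y.den:ℝ)) := by
      rw [← hyx]; linarith
    have h2 : (0:ℝ) < ((MK.DET X Y : ℤ):ℝ) := by
      by_contra hcon
      push_neg at hcon
      have : ((MK.DET X Y : ℤ):ℝ) / ((x.den:ℝ)*(y.den:ℝ)) ≤ 0 :=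
        div_nonpos_of_nonpos_of_nonneg hcon (by positivity)
      linarith
    exact_mod_cast h2
  have hYZ : 1 ≤ MK.DET Y Z := by
    have h1 : (0:ℝ) < ((MK.DET Y Z : ℤ):ℝ) / ((y.den:ℝ)*(z.den:ℝ)) := by
      rw [← hzy]; linarith
    have h2 : (0:ℝ) < ((MK.DET Y Z : ℤ):ℝ) := by
      by_contra hcon
      push_neg at hcon
      have : ((MK.DET Y Z : ℤ):ℝ) / ((y.den:ℝ)*(z.den:ℝ)) ≤ 0 :=
        div_nonpos_of_nonpos_of_nonneg hcon (by positivity)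
      linarith
    exact_mod_cast h2
  have hXZ : 1 ≤ MK.DET X Z := by
    have h1 : (0:ℝ) < ((MK.DET X Z : ℤ):ℝ) / ((x.den:ℝ)*(z.den:ℝ)) := by
      rw [← hzx]; linarith
    have h2 : (0:ℝ) < ((MK.DET X Z : ℤ):ℝ) := by
      by_contra hcon
      push_neg at hcon
      have : ((MK.DET X Z : ℤ):ℝ) / ((x.den:ℝ)*(z.den:ℝ)) ≤ 0 :=
        div_nonpos_of_nonpos_of_nonneg hcon (by positivity)
      linarith
    exact_mod_cast h2
  have key := MK.main_ineq hT H (MK.rat_prim x) (MK.rat_prim y) (MK.rat_prim z) hXY hYZ hXZ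
  -- the Ffun values
  have hFx : Ffun T x = MK.L T X / (x.den : ℝ) := rfl
  have hFy : Ffun T y = MK.L T Y / (y.den : ℝ) := rfl
  have hFz : Ffun T z = MK.L T Z / (z.den : ℝ) := rfl
  rw [hFx, hFy, hFz, hyx, hzy]
  have e1 : (MK.L T Y/(y.den:ℝ) - MK.L T X/(x.den:ℝ)) * (((MK.DET Y Z : ℤ):ℝ)/((y.den:ℝ)*(z.den:ℝ)))
      = ((MK.L T Y*(x.den:ℝ) - MK.L T X*(y.den:ℝ)) * ((MK.DET Y Z : ℤ):ℝ))
        / ((x.den:ℝ)*(y.den:ℝ)*(y.den:ℝ)*(z.den:ℝ)) := by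
    field_simp
  have e2 : (MK.L T Z/(z.den:ℝ) - MK.L T Y/(y.den:ℝ)) * (((MK.DET X Y : ℤ):ℝ)/((x.den:ℝ)*(y.den:ℝ)))
      = ((MK.L T Z*(y.den:ℝ) - MK.L T Y*(z.den:ℝ)) * ((MK.DET X Y : ℤ):ℝ))
        / ((x.den:ℝ)*(y.den:ℝ)*(y.den:ℝ)*(z.den:ℝ)) := by
    field_simp
  rw [e1, e2, div_lt_div_iff_of_pos_right (by positivity)]
  -- numerator inequality
  have hqid : ((y.den:ℤ):ℝ) * (MK.DET X Z : ℤ)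
      = ((x.den:ℤ):ℝ) * (MK.DET Y Z : ℤ) + ((z.den:ℤ):ℝ) * (MK.DET X Y : ℤ) := by
    have : (y.den:ℤ) * MK.DET X Z = (x.den:ℤ) * MK.DET Y Z + (z.den:ℤ) * MK.DET X Y := by
      unfold MK.DET; rw [hXdef, hYdef, hZdef]; ring
    exact_mod_cast congrArg (fun n : ℤ => (n : ℝ)) this
  have s := mul_lt_mul_of_pos_left key hqy0
  have h6 := congrArg (fun w : ℝ => w * MK.L T Y) hqid
  push_cast at s h6 hqid ⊢
  nlinarith [s, h6]
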